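/- Unique-shortest-path beacon heuristic with tie breaking is admissible: let G be a weighted graph in which for every pair (s,t) the second-shortest path is longer than the shortest by more than 3. Fix a beacon b and define h₀(s,t) = |dist(b,s) − dist(b,t)|. Then for all s ≠ t, either h₀(s,t) = dist(s,t) or h₀(s,t) ≤ dist(s,t) − 3; consequently the heuristic h(s,t) defined as dist(s,t) when h₀(s,t) = dist(s,t) and h₀(s,t)+2 otherwise satisfies h(s,t) ≤ dist(s,t). -/
import Mathlib

/-- Cost of a walk given as a list of vertices: sum of edge weights of consecutive pairs. -/
def walkCost {V : Type*} (w : V → V → ℝ) : List V → ℝ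
  | [] => 0
  | [_] => 0
  | a :: b :: rest => w a b + walkCost w (b :: rest)

/-- `IsWalk E s t l` : `l` is a walk from `s` to `t` using edges of `E`. -/
def IsWalk {V : Type*} (E : V → V → Prop) (s t : V) : List V → Prop
  | [] => False
  | [a] => a = s ∧ a = t
  | a :: b :: rest => a = s ∧ E a b ∧ IsWalk E b t (b :: rest)

/-- Shortest-path distance: infimum of costs of walks from `s` to `t`. -/
noncomputable def gDist {V : Type*} (E : V → V → Prop) (w : V → V → ℝ) (s t : V) : ℝ :=
  sInf (walkCost w '' {l | IsWalk E s t l})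

section Aux
variable {V : Type*} {E : V → V → Prop} {w : V → V → ℝ}

lemma isWalk_head {s t : V} {l : List V} (h : IsWalk E s t l) : ∃ l', l = s :: l' := by
  cases l with
  | nil => exact h.elim
  | cons a l' =>
    cases l' with
    | nil => exact ⟨[], by rw [h.1]⟩
    | cons b r => exact ⟨b :: r, by rw [h.1]⟩

lemma walkCost_nonneg (hw : ∀ u v, E u v → 0 ≤ w u v) :
    ∀ (l : List V) (s t : V), IsWalk E s t l → 0 ≤ walkCost w l := by
  intro l
  induction l with
  | nil => intro s t h; exact h.elim
  | cons a rest ih =>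
    intro s t h
    cases rest with
    | nil => simp [walkCost]
    | cons b r =>
      obtain ⟨_, hab, hrest⟩ := h
      have h1 := ih b t hrest
      have h2 := hw a b hab
      simp only [walkCost]
      linarith

lemma isWalk_append :
    ∀ (l : List V) (s t u : V), IsWalk E s t l → ∀ m, IsWalk E t u m →
      ∃ p, IsWalk E s u p ∧ walkCost w p = walkCost w l + walkCost w m := by
  intro l
  induction l with
  | nil => intro s t u h; exact h.elim
  | cons a rest ih =>
    intro s t u h m hm
    cases rest with
    | nil =>
      obtain ⟨has, hat⟩ := h
      subst has; subst hat
      exact ⟨m, hm, by simp [walkCost]⟩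
    | cons c r =>
      obtain ⟨has, hac, hrest⟩ := h
      obtain ⟨p, hp, hc⟩ := ih c t u hrest m hm
      obtain ⟨p', rfl⟩ := isWalk_head hp
      subst has
      refine ⟨a :: c :: p', ⟨rfl, hac, hp⟩, ?_⟩
      simp only [walkCost] at hc ⊢
      linarith

lemma isWalk_rev (hEsymm : ∀ u v, E u v → E v u) (hwsymm : ∀ u v, w u v = w v u) :
    ∀ (l : List V) (s t : V), IsWalk E s t l →
      ∃ m, IsWalk E t s m ∧ walkCost w m = walkCost w l := by
  intro l
  induction l with
  | nil => intro s t h; exact h.elim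
  | cons a rest ih =>
    intro s t h
    cases rest with
    | nil =>
      obtain ⟨has, hat⟩ := h
      exact ⟨[a], ⟨hat, has⟩, rfl⟩
    | cons c r =>
      obtain ⟨has, hac, hrest⟩ := h
      obtain ⟨m, hm, hcm⟩ := ih c t hrest
      have htail : IsWalk E c s [c, a] := ⟨rfl, hEsymm a c hac, ⟨rfl, has⟩⟩
      obtain ⟨p, hp, hcp⟩ := isWalk_append (w := w) m t c s hm [c, a] htail
      refine ⟨p, hp, ?_⟩
      simp only [walkCost] at hcp ⊢
      rw [hwsymm c a] at hcp
      linarith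

lemma gDist_le (hw : ∀ u v, E u v → 0 ≤ w u v) {s t : V} {l : List V} (h : IsWalk E s t l) :
    gDist E w s t ≤ walkCost w l := by
  apply csInf_le
  · exact ⟨0, by rintro x ⟨l', hl', rfl⟩; exact walkCost_nonneg hw l' s t hl'⟩
  · exact ⟨l, h, rfl⟩

lemma gDist_attained (hw : ∀ u v, E u v → 0 ≤ w u v)
    (hconn : ∀ s t : V, ∃ l, IsWalk E s t l)
    (hmargin : ∀ (s t : V) (l : List V), IsWalk E s t l →
      walkCost w l ≠ gDist E w s t → gDist E w s t + 3 < walkCost w l)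
    (s t : V) : ∃ l, IsWalk E s t l ∧ walkCost w l = gDist E w s t := by
  by_contra hcon
  push_neg at hcon
  obtain ⟨l0, hl0⟩ := hconn s t
  have hne : (walkCost w '' {l | IsWalk E s t l}).Nonempty := ⟨_, ⟨l0, hl0, rfl⟩⟩
  have : gDist E w s t + 3 ≤ gDist E w s t := by
    apply le_csInf hne
    rintro x ⟨l, hl, rfl⟩
    exact (hmargin s t l hl (hcon l hl)).le
  linarith

lemma gDist_symm (hw : ∀ u v, E u v → 0 ≤ w u v)
    (hEsymm : ∀ u v, E u v → E v u) (hwsymm : ∀ u v, w u v = w v u)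
    (hconn : ∀ s t : V, ∃ l, IsWalk E s t l)
    (s t : V) : gDist E w s t = gDist E w t s := by
  have key : ∀ s t : V, gDist E w t s ≤ gDist E w s t := by
    intro s t
    obtain ⟨l0, hl0⟩ := hconn s t
    have hne : (walkCost w '' {l | IsWalk E s t l}).Nonempty := ⟨_, ⟨l0, hl0, rfl⟩⟩
    apply le_csInf hne
    rintro x ⟨l, hl, rfl⟩
    obtain ⟨m, hm, hcm⟩ := isWalk_rev hEsymm hwsymm l s t hl
    exact hcm ▸ gDist_le hw hm
  exact le_antisymm (key t s) (key s t)

end Aux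

open scoped Classical in
/-- Unique-shortest-path beacon heuristic with tie breaking is admissible: with margin `> 3`
between the shortest and any non-shortest walk, the beacon heuristic
`h₀(s,t) = |dist(b,s) − dist(b,t)|` is either exact or at least `3` below `dist(s,t)`, and the
tie-broken heuristic (adding `2` in the non-exact case) is admissible. -/
theorem beacon_tie_breaking_admissible {V : Type*} (E : V → V → Prop) (w : V → V → ℝ)
    (hwnonneg : ∀ u v, E u v → 0 ≤ w u v)
    (hEsymm : ∀ u v, E u v → E v u)
    (hwsymm : ∀ u v, w u v = w v u)
    (hconn : ∀ s t : V, ∃ l, IsWalk E s t l)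
    -- margin assumption: any walk that is not a shortest path is longer by more than 3
    (hmargin : ∀ (s t : V) (l : List V), IsWalk E s t l →
      walkCost w l ≠ gDist E w s t → gDist E w s t + 3 < walkCost w l)
    (b : V) :
    ∀ s t : V, s ≠ t →
      (|gDist E w b s - gDist E w b t| = gDist E w s t ∨
        |gDist E w b s - gDist E w b t| ≤ gDist E w s t - 3) ∧
      (if |gDist E w b s - gDist E w b t| = gDist E w s t then gDist E w s t
        else |gDist E w b s - gDist E w b t| + 2) ≤ gDist E w s t := by
  intro s t hst
  have hAt := gDist_attained hwnonneg hconn hmargin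
  obtain ⟨lst, hlst, hcst⟩ := hAt s t
  obtain ⟨lbt, hlbt, hcbt⟩ := hAt b t
  obtain ⟨lbs, hlbs, hcbs⟩ := hAt b s
  obtain ⟨lts, hlts, hcts⟩ := isWalk_rev hEsymm hwsymm lst s t hlst
  have main : |gDist E w b s - gDist E w b t| = gDist E w s t ∨
      |gDist E w b s - gDist E w b t| ≤ gDist E w s t - 3 := by
    rcases le_or_gt (gDist E w b t) (gDist E w b s) with hcase | hcase
    · obtain ⟨p, hp, hcp⟩ := isWalk_append (w := w) lbt b t s hlbt lts hlts
      have hle : gDist E w b s ≤ walkCost w p := gDist_le hwnonneg hp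
      rw [hcp, hcbt, hcts, hcst] at hle
      by_cases heq : walkCost w p = gDist E w b s
      · left
        rw [hcp, hcbt, hcts, hcst] at heq
        rw [abs_of_nonneg (by linarith)]
        linarith
      · right
        have hm := hmargin b s p hp heq
        rw [hcp, hcbt, hcts, hcst] at hm
        rw [abs_of_nonneg (by linarith)]
        linarith
    · obtain ⟨p, hp, hcp⟩ := isWalk_append (w := w) lbs b s t hlbs lst hlst
      have hle : gDist E w b t ≤ walkCost w p := gDist_le hwnonneg hp
      rw [hcp, hcbs, hcst] at hle
      by_cases heq : walkCost w p = gDist E w b t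
      · left
        rw [hcp, hcbs, hcst] at heq
        rw [abs_of_nonpos (by linarith)]
        linarith
      · right
        have hm := hmargin b t p hp heq
        rw [hcp, hcbs, hcst] at hm
        rw [abs_of_nonpos (by linarith)]
        linarith
  refine ⟨main, ?_⟩
  split_ifs with h
  · exact le_refl _
  · rcases main with h1 | h1
    · exact absurd h1 h
    · linarith
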